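/- In the algebra of δ-pseudo-differential operators over a regular-discrete time scale (graininess μ(x) ≠ 0 everywhere), the element 1 + μδ is invertible with nonnegative-order inverse (1+μδ)^{−1} = ∑_{k=0}^∞ (−δ)^k (μ^k + Δ(μ^{k+1})) = ∑_{k=0}^∞ (−δ)^k (E(μ^{k+1})/μ), i.e. this series, multiplied on the right by (1+μδ), equals 1 (using E = 1 + μΔ and the converse Leibniz formula). -/

import Mathlib

/-- The coefficients (written to the right of the powers of `δ`) of the formal
series `S = ∑_{k=0}^∞ (−δ)ᵏ (E(μ^{k+1})/μ)`, the candidate nonnegative-order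
inverse of `1 + μδ`. -/
noncomputable def invSeriesCoeff {R : Type*} [CommRing R] (E : R ≃+* R) (μ : R)
    [Invertible μ] (k : ℤ) : R :=
  if 0 ≤ k then (-1 : R) ^ k.toNat * E (μ ^ (k.toNat + 1)) * ⅟μ else 0

/-- On a regular-discrete time scale (`μ` invertible), in the algebra of
`δ`-pseudo-differential operators (`δu = Δu + (Eu)δ`, `E = 1 + μΔ`), the series
`S = ∑_{k=0}^∞ (−δ)ᵏ (E(μ^{k+1})/μ) = ∑_{k=0}^∞ (−δ)ᵏ (μᵏ + Δ(μ^{k+1}))`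
satisfies `S·(1+μδ) = 1`, i.e. `1 + μδ` is invertible with nonnegative-order
inverse `S`.  Coefficient-wise (writing `A = ∑ δⁱ aᵢ` with coefficients on the
right, so that `(A(1+μδ))_m = a_m − Δ(E⁻¹(a_m μ)) + E⁻¹(a_{m−1} μ)` by the rule
`uδ = δE⁻¹u − Δ(E⁻¹u)`), the product `S·(1+μδ)` has coefficient `1` at `δ⁰`
and `0` elsewhere. -/
theorem inv_one_add_mu_delta (R : Type*) [CommRing R] (E : R ≃+* R) (μ : R)
    [Invertible μ] (Δ : R → R)
    (hLeibniz : ∀ a b : R, Δ (a * b) = Δ a * b + E a * Δ b)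
    (hE : ∀ a : R, E a = a + μ * Δ a) :
    ∀ m : ℤ,
      invSeriesCoeff E μ m - Δ (E.symm (invSeriesCoeff E μ m * μ))
          + E.symm (invSeriesCoeff E μ (m - 1) * μ)
        = if m = 0 then 1 else 0 := by
  have hfix : ∀ x : R, E x = x → Δ x = 0 := by
    intro x hx
    have h := hE x
    rw [hx] at h
    have hμ : μ * Δ x = 0 := by linear_combination -h
    calc Δ x = ⅟μ * (μ * Δ x) := by rw [← mul_assoc, invOf_mul_self, one_mul]
      _ = 0 := by rw [hμ, mul_zero]
  have hΔ0 : Δ (0 : R) = 0 := hfix 0 (by simp)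
  have hΔsign : ∀ n : ℕ, Δ ((-1 : R) ^ n) = 0 := by
    intro n; exact hfix _ (by simp)
  have hcan : ∀ x : R, x * ⅟μ * μ = x := by
    intro x; rw [mul_assoc, invOf_mul_self, mul_one]
  have key : ∀ n : ℕ, E (μ ^ (n + 1)) * ⅟μ = μ ^ n + Δ (μ ^ (n + 1)) := by
    intro n
    have k1 : μ ^ (n + 1) * ⅟μ = μ ^ n := by
      rw [pow_succ, mul_assoc, mul_invOf_self, mul_one]
    have k2 : μ * Δ (μ ^ (n + 1)) * ⅟μ = Δ (μ ^ (n + 1)) := by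
      rw [mul_comm μ (Δ (μ ^ (n + 1))), mul_assoc, mul_invOf_self, mul_one]
    rw [hE, add_mul, k1, k2]
  intro m
  unfold invSeriesCoeff
  rcases lt_or_ge m 0 with hm | hm
  · have h1 : ¬ (0 ≤ m) := not_le.mpr hm
    have h2 : ¬ (0 ≤ m - 1) := by omega
    have h3 : m ≠ 0 := by omega
    simp [h1, h2, h3, hΔ0, show ¬ (1 : ℤ) ≤ m by omega]
  · rcases eq_or_lt_of_le hm with h0 | h0
    · have hm0 : m = 0 := h0.symm
      subst hm0
      have h2 : ¬ ((0 : ℤ) ≤ 0 - 1) := by omega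
      simp only [le_refl, if_pos, h2, if_neg, not_false_iff, Int.toNat_zero,
        pow_zero, one_mul, zero_mul, map_zero, if_true]
      rw [hcan, RingEquiv.symm_apply_apply, pow_one, hE μ]
      rw [add_mul, mul_comm μ (Δ μ), mul_assoc, mul_invOf_self, mul_one]
      ring
    · -- m ≥ 1
      have h1 : (0 : ℤ) ≤ m := hm
      have h2 : (0 : ℤ) ≤ m - 1 := by omega
      have h3 : m ≠ 0 := by omega
      obtain ⟨j, hj⟩ : ∃ j : ℕ, m.toNat = j + 1 := by
        refine ⟨m.toNat - 1, ?_⟩; omega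
      have hj' : (m - 1).toNat = j := by omega
      simp only [h1, h2, if_pos, h3, if_neg, not_false_iff, hj, hj']
      rw [hcan, hcan]
      have hsymm : ∀ (n : ℕ), E.symm ((-1 : R) ^ n * E (μ ^ (n + 1)))
          = (-1 : R) ^ n * μ ^ (n + 1) := by
        intro n
        rw [map_mul, RingEquiv.symm_apply_apply]
        congr 1
        rw [map_pow, map_neg, map_one]
      rw [hsymm, hsymm]
      have hΔmul : Δ ((-1 : R) ^ (j + 1) * μ ^ (j + 1 + 1))
          = (-1 : R) ^ (j + 1) * Δ (μ ^ (j + 1 + 1)) := by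
        rw [hLeibniz, hΔsign, zero_mul, zero_add]
        congr 1
        rw [map_pow, map_neg, map_one]
      rw [hΔmul, mul_assoc, key]
      ring
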